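/- For fixed R > 0 and r > R, and for every natural number n, ∫_r^∞ T_n(r/ρ) / √(1 − (r/ρ)²) · ρ^{−k} dρ = 0 whenever k is a positive integer with k ≤ n, n − k even, and k ≥ 2. -/

import Mathlib

open MeasureTheory Real

lemma J_zero : ∀ (m : ℕ), ∀ (n : ℕ), m + 2 ≤ n → (n - m) % 2 = 0 →
    ∫ x in (0:ℝ)..(π/2), Real.cos (n * x) * Real.cos x ^ m = 0 := by
  intro m
  induction m with
  | zero =>
    intro n hn hpar
    simp only [pow_zero, mul_one]
    have hn0 : (n:ℝ) ≠ 0 := by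
      have : (0:ℕ) < n := by omega
      exact_mod_cast this.ne'
    have h := intervalIntegral.integral_comp_mul_left (a := (0:ℝ)) (b := π/2)
      (fun x => Real.cos x) (c := (n:ℝ)) hn0
    obtain ⟨j, hj⟩ : ∃ j, n = 2 * j := ⟨n/2, by omega⟩
    have h2 : (n:ℝ) * (π/2) = j * π := by rw [hj]; push_cast; ring
    rw [h]
    simp [integral_cos, h2, Real.sin_nat_mul_pi]
  | succ m ih =>
    intro n hn hpar
    have key : ∀ x : ℝ, Real.cos (n * x) * Real.cos x ^ (m+1) =
        (Real.cos ((n+1 : ℕ) * x) * Real.cos x ^ m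
          + Real.cos ((n-1 : ℕ) * x) * Real.cos x ^ m) / 2 := by
      intro x
      have h1 : ((n+1 : ℕ) : ℝ) * x = n * x + x := by push_cast; ring
      have h2 : ((n-1 : ℕ) : ℝ) * x = n * x - x := by
        have h3 : ((n-1 : ℕ) : ℝ) = (n : ℝ) - 1 := by
          have : (1:ℕ) ≤ n := by omega
          push_cast [this]; ring
        rw [h3]; ring
      rw [h1, h2, Real.cos_add, Real.cos_sub]
      ring
    rw [intervalIntegral.integral_congr (fun x _ => key x)]
    have hA : IntervalIntegrable (fun x => Real.cos ((n+1:ℕ) * x) * Real.cos x ^ m)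
        volume 0 (π/2) := (by fun_prop : Continuous fun x => Real.cos ((n+1:ℕ) * x) * Real.cos x ^ m).intervalIntegrable _ _
    have hB : IntervalIntegrable (fun x => Real.cos ((n-1:ℕ) * x) * Real.cos x ^ m)
        volume 0 (π/2) := (by fun_prop : Continuous fun x => Real.cos ((n-1:ℕ) * x) * Real.cos x ^ m).intervalIntegrable _ _
    rw [intervalIntegral.integral_div, intervalIntegral.integral_add hA hB,
      ih (n+1) (by omega) (by omega), ih (n-1) (by omega) (by omega)]
    norm_num

theorem stmt_9 (R r : ℝ) (hR : 0 < R) (hr : R < r) (n k : ℕ)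
    (hk2 : 2 ≤ k) (hkn : k ≤ n) (heven : Even (n - k)) :
    ∫ ρ in Set.Ioi r,
        (Polynomial.Chebyshev.T ℝ n).eval (r / ρ) / Real.sqrt (1 - (r / ρ) ^ 2) *
          ρ ^ (-(k : ℤ)) = 0 := by
  have hr0 : 0 < r := hR.trans hr
  have hrne : r ≠ 0 := hr0.ne'
  set s : Set ℝ := Set.Ioo 0 (π/2) with hs_def
  set f : ℝ → ℝ := fun ν => r / Real.cos ν with hf_def
  set f' : ℝ → ℝ := fun ν => r * Real.sin ν / Real.cos ν ^ 2 with hf'_def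
  set g : ℝ → ℝ := fun ρ =>
    (Polynomial.Chebyshev.T ℝ n).eval (r / ρ) / Real.sqrt (1 - (r / ρ) ^ 2) *
      ρ ^ (-(k : ℤ)) with hg_def
  have hcos : ∀ ν ∈ s, 0 < Real.cos ν := fun ν hν =>
    Real.cos_pos_of_mem_Ioo ⟨by nlinarith [hν.1, pi_pos], by linarith [hν.2]⟩
  have hsin : ∀ ν ∈ s, 0 < Real.sin ν := fun ν hν =>
    Real.sin_pos_of_pos_of_lt_pi hν.1 (by nlinarith [hν.2, pi_pos])
  have hderiv : ∀ ν ∈ s, HasDerivWithinAt f (f' ν) s ν := by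
    intro ν hν
    have hc := (hcos ν hν).ne'
    have : HasDerivAt f ((0 * Real.cos ν - r * (-Real.sin ν)) / Real.cos ν ^ 2) ν :=
      (hasDerivAt_const ν r).div (Real.hasDerivAt_cos ν) hc
    refine (this.congr_deriv ?_).hasDerivWithinAt
    simp only [hf'_def]
    ring
  have hinj : Set.InjOn f s := by
    intro a ha b hb hab
    have hca := (hcos a ha).ne'
    have hcb := (hcos b hb).ne'
    have hfb : f b ≠ 0 := by
      have : 0 < r / Real.cos b := div_pos hr0 (hcos b hb)
      simpa [hf_def] using this.ne'
    have : Real.cos a = Real.cos b := by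
      have h1 : f a * Real.cos a = r := by
        simp only [hf_def]; field_simp
      have h2 : f b * Real.cos b = r := by
        simp only [hf_def]; field_simp
      rw [hab] at h1
      exact mul_left_cancel₀ hfb (h1.trans h2.symm)
    exact Real.injOn_cos ⟨ha.1.le, by linarith [ha.2, pi_pos]⟩
      ⟨hb.1.le, by linarith [hb.2, pi_pos]⟩ this
  have himg : f '' s = Set.Ioi r := by
    ext ρ
    constructor
    · rintro ⟨ν, hν, rfl⟩
      have hc := hcos ν hν
      have hc1 : Real.cos ν < 1 := by
        calc Real.cos ν < Real.cos 0 := by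
              apply Real.cos_lt_cos_of_nonneg_of_le_pi le_rfl ?_ hν.1
              nlinarith [hν.2, pi_pos]
          _ = 1 := Real.cos_zero
      have : r < r / Real.cos ν := by
        rw [lt_div_iff₀ hc]
        nlinarith
      exact this
    · intro hρ
      have hρ0 : 0 < ρ := hr0.trans hρ
      have h1 : 0 < r / ρ := div_pos hr0 hρ0
      have h2 : r / ρ < 1 := (div_lt_one hρ0).2 hρ
      refine ⟨Real.arccos (r / ρ), ⟨Real.arccos_pos.2 h2, Real.arccos_lt_pi_div_two.2 h1⟩, ?_⟩
      have : Real.cos (Real.arccos (r / ρ)) = r / ρ :=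
        Real.cos_arccos (by linarith) h2.le
      simp only [hf_def, this]
      field_simp
  have hmeas : MeasurableSet s := measurableSet_Ioo
  have hsub := integral_image_eq_integral_abs_deriv_smul hmeas hderiv hinj g
  rw [← himg, hsub]
  have heq : Set.EqOn (fun ν => |f' ν| • g (f ν))
      (fun ν => r ^ ((1:ℤ) - k) * (Real.cos (n * ν) * Real.cos ν ^ (k - 2))) s := by
    intro ν hν
    have hc := hcos ν hν
    have hsν := hsin ν hν
    have hcik : r / (r / Real.cos ν) = Real.cos ν := by field_simp
    have hsqrt : Real.sqrt (1 - Real.cos ν ^ 2) = Real.sin ν := by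
      rw [show (1 : ℝ) - Real.cos ν ^ 2 = Real.sin ν ^ 2 by
        nlinarith [Real.sin_sq_add_cos_sq ν]]
      exact Real.sqrt_sq hsν.le
    have hT : (Polynomial.Chebyshev.T ℝ n).eval (Real.cos ν) = Real.cos (n * ν) := by
      have := Polynomial.Chebyshev.T_real_cos ν (n : ℤ)
      push_cast at this
      exact this
    have habs : |f' ν| = r * Real.sin ν / Real.cos ν ^ 2 := by
      rw [abs_of_pos]
      positivity
    have hzpow : (r / Real.cos ν) ^ (-(k:ℤ)) = Real.cos ν ^ k / r ^ k := by
      rw [zpow_neg, zpow_natCast, div_pow, inv_div]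
    have hck : Real.cos ν ^ k = Real.cos ν ^ (k - 2) * Real.cos ν ^ 2 := by
      rw [← pow_add]; congr 1; omega
    have hrz : r ^ ((1:ℤ) - k) = r / r ^ k := by
      rw [zpow_sub₀ hrne, zpow_one, zpow_natCast]
    simp only [hg_def, hf_def, smul_eq_mul, hcik, hsqrt, hT, habs, hzpow, hck, hrz]
    field_simp
  rw [setIntegral_congr_fun hmeas heq, MeasureTheory.integral_const_mul]
  have : ∫ ν in s, Real.cos (n * ν) * Real.cos ν ^ (k - 2) =
      ∫ x in (0:ℝ)..(π/2), Real.cos (n * x) * Real.cos x ^ (k - 2) := by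
    rw [intervalIntegral.integral_of_le (by positivity), integral_Ioc_eq_integral_Ioo]
  have hpar : (n - k) % 2 = 0 := Nat.even_iff.mp heven
  rw [this, J_zero (k - 2) n (by omega) (by omega)]
  simp
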